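/- arXiv:1602.07806 — 3 statements merged into one kernel-verified Lean document; each statement's English description precedes it below -/
import Mathlib

section
/- Let σ : ℝ^d → ℝ^{d×k} be bounded and Lipschitz with constant L_σ (i.e. |σ(x)| ≤ L_σ and |σ(x)-σ(y)| ≤ L_σ|x-y|), set A(x) = σ(x)σ(x)^T, and let α > 0. Suppose x̄ ≠ ȳ in ℝ^d and X, Y are symmetric d×d matrices satisfying the block inequality diag(X, -Y) ≤ D²φ_α(x̄,ȳ), where φ_α(x,y) = |x-y|^α. Then Tr(A(x̄)X - A(ȳ)Y) ≤ α(1 + |α-2|) L_σ² |x̄ - ȳ|^α. -/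
open Matrix

/-- Frobenius norm of a real matrix. -/
noncomputable def frobNorm {d k : ℕ} (M : Matrix (Fin d) (Fin k) ℝ) : ℝ :=
  Real.sqrt (∑ i, ∑ j, (M i j) ^ 2)

/-- Key degenerate-ellipticity estimate (Lemma 2.2 of the paper): if
diag(X, -Y) ≤ D²φ_α(xb,yb) (the explicitly computed Hessian of φ_α(x,y)=‖x-y‖^α),
A = σσᵀ with σ bounded and Lipschitz with constant L_σ, then
Tr(A(xb)X - A(yb)Y) ≤ α(1+|α-2|)L_σ²‖xb-yb‖^α. -/
theorem stmt2 {d k : ℕ} (α Lσ : ℝ) (hα : 0 < α) (hLσ : 0 ≤ Lσ)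
    (σ : EuclideanSpace ℝ (Fin d) → Matrix (Fin d) (Fin k) ℝ)
    (hσbd : ∀ x, frobNorm (σ x) ≤ Lσ)
    (hσlip : ∀ x y, frobNorm (σ x - σ y) ≤ Lσ * ‖x - y‖)
    (A : EuclideanSpace ℝ (Fin d) → Matrix (Fin d) (Fin d) ℝ)
    (hA : ∀ x, A x = σ x * (σ x)ᵀ)
    (xb yb : EuclideanSpace ℝ (Fin d)) (hxy : xb ≠ yb)
    (Z : Matrix (Fin d) (Fin d) ℝ)
    (hZ : ∀ i j, Z i j = (if i = j then (1 : ℝ) else 0) +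
      (α - 2) * ((‖xb - yb‖⁻¹ • (xb - yb)) i) * ((‖xb - yb‖⁻¹ • (xb - yb)) j))
    (Hess : Matrix (Fin d ⊕ Fin d) (Fin d ⊕ Fin d) ℝ)
    (hHess : Hess = Matrix.fromBlocks
      ((α * ‖xb - yb‖ ^ (α - 2)) • Z) (-((α * ‖xb - yb‖ ^ (α - 2)) • Z))
      (-((α * ‖xb - yb‖ ^ (α - 2)) • Z)) ((α * ‖xb - yb‖ ^ (α - 2)) • Z))
    (X Y : Matrix (Fin d) (Fin d) ℝ) (hX : X.IsSymm) (hY : Y.IsSymm)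
    (hle : (Hess - Matrix.fromBlocks X 0 0 (-Y)).PosSemidef) :
    Matrix.trace (A xb * X - A yb * Y) ≤ α * (1 + |α - 2|) * Lσ ^ 2 * ‖xb - yb‖ ^ α := by
  set r : ℝ := ‖xb - yb‖ with hrdef
  have hr : 0 < r := by
    simpa [hrdef] using norm_pos_iff.mpr (sub_ne_zero.mpr hxy)
  set c : ℝ := α * r ^ (α - 2) with hcdef
  have hc : 0 ≤ c := by positivity
  set n : Fin d → ℝ := fun i => (r⁻¹ • (xb - yb)) i with hndef
  have hZapp : ∀ i j, Z i j = (if i = j then (1 : ℝ) else 0) + (α - 2) * n i * n j := by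
    intro i j; rw [hZ i j]
  -- sum of squares of n is 1
  have hnsq : ∑ i, n i ^ 2 = 1 := by
    have hv : ∑ i, ((xb - yb) i) ^ 2 = r ^ 2 := by
      have h1 : r ^ 2 = ∑ i, ‖(xb - yb) i‖ ^ 2 := by
        rw [hrdef, EuclideanSpace.norm_eq (xb - yb), Real.sq_sqrt]
        positivity
      rw [h1]
      exact (Finset.sum_congr rfl fun i _ => by rw [Real.norm_eq_abs, sq_abs]).symm
    have hni : ∀ i, n i ^ 2 = r⁻¹ ^ 2 * ((xb - yb) i) ^ 2 := by
      intro i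
      simp only [hndef, PiLp.smul_apply, smul_eq_mul]
      ring
    rw [Finset.sum_congr rfl fun i _ => hni i, ← Finset.mul_sum, hv]
    field_simp
  -- quadratic form bound for Z
  have hZquad : ∀ w : Fin d → ℝ, w ⬝ᵥ (Z *ᵥ w) ≤ (1 + |α - 2|) * ∑ i, w i ^ 2 := by
    intro w
    set s : ℝ := ∑ j, n j * w j with hsdef
    have hrow : ∀ i, (Z *ᵥ w) i = w i + ((α - 2) * n i) * s := by
      intro i
      show ∑ j, Z i j * w j = _
      rw [Finset.sum_congr rfl fun j _ => by rw [hZapp i j]]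
      have e1 : ∀ j, ((if i = j then (1:ℝ) else 0) + (α - 2) * n i * n j) * w j
          = (if i = j then w j else 0) + ((α - 2) * n i) * (n j * w j) := by
        intro j; by_cases h : i = j <;> simp [h] <;> ring
      rw [Finset.sum_congr rfl fun j _ => e1 j, Finset.sum_add_distrib,
        Finset.sum_ite_eq Finset.univ i (fun j => w j), ← Finset.mul_sum]
      simp [hsdef]
    have hexp : w ⬝ᵥ (Z *ᵥ w) = (∑ i, w i ^ 2) + (α - 2) * s ^ 2 := by
      show ∑ i, w i * (Z *ᵥ w) i = _
      rw [Finset.sum_congr rfl fun i _ => by rw [hrow i]]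
      have e2 : ∀ i, w i * (w i + ((α - 2) * n i) * s) =
          w i ^ 2 + ((α - 2) * s) * (n i * w i) := by intro i; ring
      rw [Finset.sum_congr rfl fun i _ => e2 i, Finset.sum_add_distrib, ← Finset.mul_sum,
        ← hsdef]
      ring
    rw [hexp]
    have hcs : s ^ 2 ≤ ∑ i, w i ^ 2 := by
      have := Finset.sum_mul_sq_le_sq_mul_sq Finset.univ n w
      rw [hnsq] at this
      simpa [hsdef] using this
    have hw : 0 ≤ ∑ i, w i ^ 2 := by positivity
    nlinarith [sq_nonneg s, abs_nonneg (α - 2), le_abs_self (α - 2)]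
  -- Z is symmetric in the quadratic form
  have hZsymm : ∀ p q : Fin d → ℝ, p ⬝ᵥ (Z *ᵥ q) = q ⬝ᵥ (Z *ᵥ p) := by
    intro p q
    have hT : Zᵀ = Z := by
      ext i j
      simp only [transpose_apply, hZapp]
      by_cases h : i = j
      · subst h; ring
      · rw [if_neg h, if_neg (Ne.symm h)]; ring
    calc p ⬝ᵥ (Z *ᵥ q) = (Zᵀ *ᵥ p) ⬝ᵥ q := by
          rw [Matrix.dotProduct_mulVec, Matrix.mulVec_transpose]
      _ = q ⬝ᵥ (Z *ᵥ p) := by rw [hT, dotProduct_comm]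
  -- key per-vector inequality
  have hkey : ∀ p q : Fin d → ℝ,
      p ⬝ᵥ (X *ᵥ p) - q ⬝ᵥ (Y *ᵥ q) ≤ c * (1 + |α - 2|) * ∑ i, (p i - q i) ^ 2 := by
    intro p q
    have h0 := hle.dotProduct_mulVec_nonneg (Sum.elim p q)
    have hstar : star (Sum.elim p q) = Sum.elim p q := by
      simp [star_trivial]
    rw [hstar, Matrix.sub_mulVec, dotProduct_sub] at h0
    have hHq : Sum.elim p q ⬝ᵥ (Hess *ᵥ Sum.elim p q)
        = c * ((p - q) ⬝ᵥ (Z *ᵥ (p - q))) := by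
      rw [hHess, Matrix.fromBlocks_mulVec]
      simp only [Sum.elim_comp_inl, Sum.elim_comp_inr, sumElim_dotProduct_sumElim,
        Matrix.neg_mulVec, Matrix.smul_mulVec, dotProduct_add,
        dotProduct_neg, dotProduct_smul, smul_eq_mul]
      rw [Matrix.mulVec_sub, dotProduct_sub, sub_dotProduct,
        sub_dotProduct]
      ring
    have hDq : Sum.elim p q ⬝ᵥ (Matrix.fromBlocks X 0 0 (-Y) *ᵥ Sum.elim p q)
        = p ⬝ᵥ (X *ᵥ p) - q ⬝ᵥ (Y *ᵥ q) := by
      rw [Matrix.fromBlocks_mulVec]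
      simp only [Sum.elim_comp_inl, Sum.elim_comp_inr, Matrix.zero_mulVec, add_zero,
        zero_add, sumElim_dotProduct_sumElim, Matrix.neg_mulVec,
        dotProduct_neg]
      ring
    rw [hHq, hDq] at h0
    have h2 := hZquad (p - q)
    calc p ⬝ᵥ (X *ᵥ p) - q ⬝ᵥ (Y *ᵥ q) ≤ c * ((p - q) ⬝ᵥ (Z *ᵥ (p - q))) := by linarith
      _ ≤ c * ((1 + |α - 2|) * ∑ i, (p i - q i) ^ 2) := by
          apply mul_le_mul_of_nonneg_left _ hc
          simpa [Pi.sub_apply] using h2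
      _ = c * (1 + |α - 2|) * ∑ i, (p i - q i) ^ 2 := by ring
  -- trace as sum over columns
  have hAt : ∀ (x : EuclideanSpace ℝ (Fin d)) (W : Matrix (Fin d) (Fin d) ℝ),
      Matrix.trace (A x * W) = ∑ m : Fin k,
        (fun i => σ x i m) ⬝ᵥ (W *ᵥ fun i => σ x i m) := by
    intro x W
    have h1 : Matrix.trace (A x * W) = ∑ i, ∑ j, ∑ m, σ x i m * σ x j m * W j i := by
      simp only [Matrix.trace, Matrix.diag, hA, Matrix.mul_apply, Matrix.transpose_apply,
        Finset.sum_mul]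
    have h2 : ∀ m : Fin k, (fun i => σ x i m) ⬝ᵥ (W *ᵥ fun i => σ x i m)
        = ∑ i, ∑ j, σ x i m * (W i j * σ x j m) := by
      intro m
      simp only [dotProduct, mulVec, Finset.mul_sum]
    rw [h1, Finset.sum_congr rfl (fun i _ => Finset.sum_comm), Finset.sum_comm]
    refine Finset.sum_congr rfl fun m _ => ?_
    rw [h2 m, Finset.sum_comm]
    exact Finset.sum_congr rfl fun a _ => Finset.sum_congr rfl fun b _ => by ring
  have htr : Matrix.trace (A xb * X - A yb * Y)
      = ∑ m : Fin k, ((fun i => σ xb i m) ⬝ᵥ (X *ᵥ fun i => σ xb i m)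
          - (fun i => σ yb i m) ⬝ᵥ (Y *ᵥ fun i => σ yb i m)) := by
    rw [Matrix.trace_sub, hAt xb X, hAt yb Y, ← Finset.sum_sub_distrib]
  rw [htr]
  have hsum : ∑ m : Fin k, ((fun i => σ xb i m) ⬝ᵥ (X *ᵥ fun i => σ xb i m)
        - (fun i => σ yb i m) ⬝ᵥ (Y *ᵥ fun i => σ yb i m))
      ≤ c * (1 + |α - 2|) * ∑ m : Fin k, ∑ i, (σ xb i m - σ yb i m) ^ 2 := by
    rw [Finset.mul_sum]
    exact Finset.sum_le_sum fun m _ => hkey (fun i => σ xb i m) (fun i => σ yb i m)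
  have hfrob : ∑ m : Fin k, ∑ i, (σ xb i m - σ yb i m) ^ 2 ≤ Lσ ^ 2 * r ^ 2 := by
    have h := hσlip xb yb
    have hS : (0:ℝ) ≤ ∑ i, ∑ m, ((σ xb - σ yb) i m) ^ 2 := by positivity
    have h3 : Real.sqrt (∑ i, ∑ m, ((σ xb - σ yb) i m) ^ 2) ≤ Lσ * r := by
      simpa [frobNorm, hrdef] using h
    have h2 : ∑ i, ∑ m, ((σ xb - σ yb) i m) ^ 2 ≤ (Lσ * r) ^ 2 := by
      calc ∑ i, ∑ m, ((σ xb - σ yb) i m) ^ 2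
          = Real.sqrt (∑ i, ∑ m, ((σ xb - σ yb) i m) ^ 2) ^ 2 := by
            rw [Real.sq_sqrt hS]
        _ ≤ (Lσ * r) ^ 2 := by
            apply pow_le_pow_left₀ (Real.sqrt_nonneg _) h3
    calc ∑ m : Fin k, ∑ i, (σ xb i m - σ yb i m) ^ 2
        = ∑ i, ∑ m, ((σ xb - σ yb) i m) ^ 2 := by
          rw [Finset.sum_comm]
          exact Finset.sum_congr rfl fun i _ => Finset.sum_congr rfl fun m _ => by
            simp [Matrix.sub_apply]
      _ ≤ (Lσ * r) ^ 2 := h2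
      _ = Lσ ^ 2 * r ^ 2 := by ring
  have hfinal : c * (1 + |α - 2|) * (Lσ ^ 2 * r ^ 2)
      = α * (1 + |α - 2|) * Lσ ^ 2 * r ^ α := by
    have hpow : r ^ (α - 2) * r ^ (2:ℕ) = r ^ α := by
      rw [← Real.rpow_natCast r 2, ← Real.rpow_add hr]
      norm_num
    rw [hcdef, ← hpow]
    push_cast
    ring
  calc ∑ m : Fin k, ((fun i => σ xb i m) ⬝ᵥ (X *ᵥ fun i => σ xb i m)
        - (fun i => σ yb i m) ⬝ᵥ (Y *ᵥ fun i => σ yb i m))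
      ≤ c * (1 + |α - 2|) * ∑ m : Fin k, ∑ i, (σ xb i m - σ yb i m) ^ 2 := hsum
    _ ≤ c * (1 + |α - 2|) * (Lσ ^ 2 * r ^ 2) := by
        apply mul_le_mul_of_nonneg_left hfrob
        positivity
    _ = α * (1 + |α - 2|) * Lσ ^ 2 * r ^ α := hfinal
end

section
/- Let m > 1 and ζ₁, ζ₂, b_m, K, L_H be as follows. Suppose H satisfies: μH(x, μ⁻¹p) - H(x,p) ≥ (1-μ)(b_m|p|^m - K) for μ ∈ (0,1), and H(y, p+q) - H(x,p) ≤ ζ₁(|x-y|)(1+|p|^m) + ζ₂(|q|)(1+|p|^{m-1}) for |q| ≤ 1, with moduli ζ₁, ζ₂. Then for all x, y, p, q with |q| ≤ 1 and all μ ∈ (0,1): μH(x, μ⁻¹p) - H(y, p+q) ≥ [(1-μ)b_m - ζ₁(|x-y|) - ((m-1)/m) ζ₂(|q|)^{m/(2(m-1))}]|p|^m - (1/m)ζ₂(|q|)^{m/2} - ζ₂(|q|) - K(1-μ) - ζ₁(|x-y|). -/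
/-- Combination of (H1), (H2) and Young's inequality used in the comparison proof. -/
theorem stmt9 {d : ℕ} (H : EuclideanSpace ℝ (Fin d) → EuclideanSpace ℝ (Fin d) → ℝ)
    (m K bm LH : ℝ) (hm : 1 < m) (hK : 0 < K) (hbm : 0 < bm)
    (ζ₁ ζ₂ : ℝ → ℝ)
    (hζ₁ : ∀ r, 0 ≤ ζ₁ r) (hζ₂ : ∀ r, 0 ≤ ζ₂ r)
    (hH1 : ∀ μ ∈ Set.Ioo (0 : ℝ) 1, ∀ x p,
      μ * H x (μ⁻¹ • p) - H x p ≥ (1 - μ) * (bm * ‖p‖ ^ m - K))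
    (hH2 : ∀ x y p q : EuclideanSpace ℝ (Fin d), ‖q‖ ≤ 1 →
      H y (p + q) - H x p ≤ ζ₁ ‖x - y‖ * (1 + ‖p‖ ^ m) + ζ₂ ‖q‖ * (1 + ‖p‖ ^ (m - 1))) :
    ∀ x y p q : EuclideanSpace ℝ (Fin d), ‖q‖ ≤ 1 → ∀ μ ∈ Set.Ioo (0 : ℝ) 1,
      μ * H x (μ⁻¹ • p) - H y (p + q)
        ≥ ((1 - μ) * bm - ζ₁ ‖x - y‖
              - ((m - 1) / m) * (ζ₂ ‖q‖) ^ (m / (2 * (m - 1)))) * ‖p‖ ^ m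
          - (1 / m) * (ζ₂ ‖q‖) ^ (m / 2) - ζ₂ ‖q‖
          - K * (1 - μ) - ζ₁ ‖x - y‖ := by
  intro x y p q hq μ hμ
  have hm0 : (0:ℝ) < m := by linarith
  have hm1 : (0:ℝ) < m - 1 := by linarith
  set z := ζ₂ ‖q‖ with hzdef
  set r := ‖p‖ with hrdef
  set A := ζ₁ ‖x - y‖ with hAdef
  have hz0 : 0 ≤ z := hζ₂ _
  have hr0 : 0 ≤ r := norm_nonneg _
  -- conjugate exponents m/(m-1) and m
  have hconj : (m / (m - 1)).HolderConjugate m := by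
    rw [Real.holderConjugate_iff]
    constructor
    · rw [one_lt_div hm1]; linarith
    · field_simp; ring
  have young := Real.young_inequality_of_nonneg
      (mul_nonneg (Real.rpow_nonneg hz0 (1/2)) (Real.rpow_nonneg hr0 (m-1)))
      (Real.rpow_nonneg hz0 (1/2)) hconj
  have hab : z ^ ((1:ℝ)/2) * r ^ (m-1) * z ^ ((1:ℝ)/2) = z * r ^ (m-1) := by
    have h : z ^ ((1:ℝ)/2) * z ^ ((1:ℝ)/2) = z := by
      rw [← Real.rpow_add' hz0 (by norm_num)]; norm_num
    rw [mul_right_comm, h]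
  have hap : (z ^ ((1:ℝ)/2) * r ^ (m-1)) ^ (m / (m-1))
      = z ^ (m / (2 * (m-1))) * r ^ m := by
    rw [Real.mul_rpow (Real.rpow_nonneg hz0 _) (Real.rpow_nonneg hr0 _),
      ← Real.rpow_mul hz0, ← Real.rpow_mul hr0]
    congr 1
    · congr 1
      field_simp
    · congr 1
      field_simp
  have hbq : (z ^ ((1:ℝ)/2)) ^ m = z ^ (m / 2) := by
    rw [← Real.rpow_mul hz0]
    congr 1
    ring
  rw [hab, hap, hbq] at young
  have hdiv : z ^ (m / (2 * (m-1))) * r ^ m / (m / (m-1))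
      = (m - 1) / m * (z ^ (m / (2 * (m-1))) * r ^ m) := by
    field_simp
  rw [hdiv] at young
  -- young : z * r^(m-1) ≤ (m-1)/m * (z^(m/(2(m-1))) * r^m) + z^(m/2)/m
  have h1 := hH1 μ hμ x p
  have h2 := hH2 x y p q hq
  simp only [← hzdef, ← hrdef, ← hAdef] at h1 h2
  have expand : ((1 - μ) * bm - A - (m - 1) / m * z ^ (m / (2 * (m - 1)))) * r ^ m
        - 1 / m * z ^ (m / 2) - z - K * (1 - μ) - A
      = ((1 - μ) * (bm * r ^ m - K) - (A * (1 + r ^ m) + z * (1 + r ^ (m - 1))))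
        + (z * r ^ (m - 1)
            - ((m - 1) / m * (z ^ (m / (2 * (m - 1))) * r ^ m) + z ^ (m / 2) / m)) := by
    ring
  linarith [young, h1, h2, expand]
end

section
/- Let g : ℝ^d × ℝ^d → ℝ be measurable, L > 1, b ∈ (0,1), C₁, C₂ > 0, P ⊂ ℝ^d measurable, and x̄, ȳ ∈ ℝ^d with |x̄ - ȳ| ≤ 1. Assume for all z ∈ P: |g(x̄,z) - g(ȳ,z)| ≤ C₁(L|x̄-ȳ| + b)|z| and |g(x̄,z)|, |g(ȳ,z)| ≤ min{C₂, C₁(L+b)|z|}. Then there exists C₃ depending only on C₁, C₂ such that for all z ∈ P: e^{g(x̄,z)} - e^{g(ȳ,z)} ≤ g(x̄,z) - g(ȳ,z) + C₃(L²|x̄-ȳ| + Lb)|z|². -/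
lemma exp_quad (s : ℝ) : Real.exp s - 1 - s ≤ s ^ 2 * Real.exp |s| := by
  rcases le_or_gt 0 s with h | h
  · rw [abs_of_nonneg h]
    have h1 := Real.add_one_le_exp (-s)
    have h2 : Real.exp (-s) * Real.exp s = 1 := by
      rw [← Real.exp_add]; simp
    have h3 := Real.exp_pos s
    nlinarith [mul_nonneg h h3.le, sq_nonneg s]
  · rw [abs_of_neg h]
    have h1 := Real.add_one_le_exp (-s)
    have h2 : Real.exp (-s) * Real.exp s = 1 := by
      rw [← Real.exp_add]; simp
    have h3 := Real.exp_pos s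
    have h4 : (1 : ℝ) ≤ Real.exp (-s) := Real.one_le_exp (by linarith)
    have h5 := Real.add_one_le_exp s
    have h6 := mul_le_mul_of_nonneg_right h1 h3.le
    nlinarith [sq_nonneg s, mul_nonneg (sq_nonneg s) (by linarith : (0:ℝ) ≤ Real.exp (-s) - 1)]

lemma exp_sub_one (t : ℝ) : |Real.exp t - 1| ≤ |t| * Real.exp |t| := by
  rcases le_or_gt 0 t with h | h
  · rw [abs_of_nonneg h, abs_of_nonneg (by nlinarith [Real.add_one_le_exp t] : (0:ℝ) ≤ Real.exp t - 1)]
    have h1 := Real.add_one_le_exp (-t)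
    have h2 : Real.exp (-t) * Real.exp t = 1 := by rw [← Real.exp_add]; simp
    have h3 := Real.exp_pos t
    nlinarith
  · rw [abs_of_neg h, abs_of_nonpos (by nlinarith [Real.exp_lt_one_iff.mpr h] : Real.exp t - 1 ≤ 0)]
    have h1 := Real.add_one_le_exp t
    have h4 : (1:ℝ) ≤ Real.exp (-t) := Real.one_le_exp (by linarith)
    nlinarith [Real.exp_pos t]

set_option maxHeartbeats 1000000 in
/-- Exponential linearization lemma (Lemma A.2 of the paper): there exists C₃
depending only on C₁, C₂ such that
e^{g(x̄,z)} - e^{g(ȳ,z)} ≤ g(x̄,z) - g(ȳ,z) + C₃(L²‖x̄-ȳ‖ + Lb)‖z‖² on P. -/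
theorem stmt12 {d : ℕ} :
    ∀ C₁ C₂ : ℝ, 0 < C₁ → 0 < C₂ →
    ∃ C₃ > (0 : ℝ),
      ∀ (g : EuclideanSpace ℝ (Fin d) → EuclideanSpace ℝ (Fin d) → ℝ)
        (L b : ℝ), 1 < L → b ∈ Set.Ioo (0 : ℝ) 1 →
        ∀ (P : Set (EuclideanSpace ℝ (Fin d)))
          (xb yb : EuclideanSpace ℝ (Fin d)), ‖xb - yb‖ ≤ 1 →
          (∀ z ∈ P, |g xb z - g yb z| ≤ C₁ * (L * ‖xb - yb‖ + b) * ‖z‖) →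
          (∀ z ∈ P, |g xb z| ≤ min C₂ (C₁ * (L + b) * ‖z‖)
            ∧ |g yb z| ≤ min C₂ (C₁ * (L + b) * ‖z‖)) →
          ∀ z ∈ P, Real.exp (g xb z) - Real.exp (g yb z)
            ≤ g xb z - g yb z + C₃ * (L ^ 2 * ‖xb - yb‖ + L * b) * ‖z‖ ^ 2 := by
  intro C₁ C₂ hC₁ hC₂
  refine ⟨5 * C₁ ^ 2 * Real.exp (3 * C₂), by positivity, ?_⟩
  intro g L b hL hb P xb yb hd hlip hbd z hz
  obtain ⟨hb0, hb1⟩ := hb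
  set a := g xb z with ha_def
  set β := g yb z with hβ_def
  set dn := ‖xb - yb‖ with hdn_def
  set n := ‖z‖ with hn_def
  have hn0 : (0:ℝ) ≤ n := norm_nonneg _
  have hdn0 : (0:ℝ) ≤ dn := norm_nonneg _
  have hs : |a - β| ≤ C₁ * (L * dn + b) * n := hlip z hz
  obtain ⟨hax, hay⟩ := hbd z hz
  have haC : |a| ≤ C₂ := hax.trans (min_le_left _ _)
  have hβC : |β| ≤ C₂ := hay.trans (min_le_left _ _)
  have hβL : |β| ≤ C₁ * (L + b) * n := hay.trans (min_le_right _ _)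
  have hsC : |a - β| ≤ 2 * C₂ := (abs_sub _ _).trans (by linarith)
  -- algebraic identity
  have hE : Real.exp β * Real.exp (a - β) = Real.exp a := by
    rw [← Real.exp_add]; ring_nf
  have key1 : Real.exp a - Real.exp β - (a - β)
      = (Real.exp β - 1) * (a - β) + Real.exp β * (Real.exp (a - β) - 1 - (a - β)) := by
    rw [← hE]; ring
  -- bound first term
  have ht1 : (Real.exp β - 1) * (a - β) ≤ Real.exp C₂ * (|β| * |a - β|) := by
    calc (Real.exp β - 1) * (a - β) ≤ |(Real.exp β - 1) * (a - β)| := le_abs_self _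
      _ = |Real.exp β - 1| * |a - β| := abs_mul _ _
      _ ≤ (|β| * Real.exp |β|) * |a - β| :=
          mul_le_mul_of_nonneg_right (exp_sub_one β) (abs_nonneg _)
      _ ≤ (|β| * Real.exp C₂) * |a - β| := by
          have : Real.exp |β| ≤ Real.exp C₂ := Real.exp_le_exp.mpr hβC
          have h0 := abs_nonneg β
          nlinarith [abs_nonneg (a - β), mul_nonneg h0 (abs_nonneg (a - β))]
      _ = Real.exp C₂ * (|β| * |a - β|) := by ring
  -- bound second term
  have hX0 : (0:ℝ) ≤ Real.exp (a - β) - 1 - (a - β) := by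
    have := Real.add_one_le_exp (a - β); linarith
  have ht2 : Real.exp β * (Real.exp (a - β) - 1 - (a - β))
      ≤ (Real.exp C₂ * Real.exp (2 * C₂)) * (a - β) ^ 2 := by
    have hβ' : Real.exp β ≤ Real.exp C₂ := Real.exp_le_exp.mpr (le_of_abs_le hβC)
    have hq : Real.exp (a - β) - 1 - (a - β) ≤ (a - β) ^ 2 * Real.exp (2 * C₂) := by
      refine (exp_quad (a - β)).trans ?_
      have : Real.exp |a - β| ≤ Real.exp (2 * C₂) := Real.exp_le_exp.mpr hsC
      nlinarith [sq_nonneg (a - β)]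
    calc Real.exp β * (Real.exp (a - β) - 1 - (a - β))
        ≤ Real.exp C₂ * ((a - β) ^ 2 * Real.exp (2 * C₂)) :=
          mul_le_mul hβ' hq hX0 (Real.exp_pos _).le
      _ = (Real.exp C₂ * Real.exp (2 * C₂)) * (a - β) ^ 2 := by ring
  -- product bounds
  have hC1Lbn : (0:ℝ) ≤ C₁ * (L * dn + b) * n := by positivity
  have hP1 : |β| * |a - β| ≤ C₁ ^ 2 * ((L + b) * (L * dn + b)) * n ^ 2 := by
    calc |β| * |a - β| ≤ (C₁ * (L + b) * n) * (C₁ * (L * dn + b) * n) :=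
          mul_le_mul hβL hs (abs_nonneg _) (by positivity)
      _ = C₁ ^ 2 * ((L + b) * (L * dn + b)) * n ^ 2 := by ring
  have hP2 : (a - β) ^ 2 ≤ C₁ ^ 2 * (L * dn + b) ^ 2 * n ^ 2 := by
    calc (a - β) ^ 2 = |a - β| ^ 2 := (sq_abs _).symm
      _ ≤ (C₁ * (L * dn + b) * n) ^ 2 := pow_le_pow_left₀ (abs_nonneg _) hs 2
      _ = C₁ ^ 2 * (L * dn + b) ^ 2 * n ^ 2 := by ring
  -- exp combos
  have hE1 : Real.exp C₂ ≤ Real.exp (3 * C₂) := Real.exp_le_exp.mpr (by linarith)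
  have hE2 : Real.exp C₂ * Real.exp (2 * C₂) = Real.exp (3 * C₂) := by
    rw [← Real.exp_add]; ring_nf
  -- polynomial inequality
  have hbL : b ≤ L := by linarith
  have e1 : b * (L * dn) ≤ L * (L * dn) := mul_le_mul_of_nonneg_right hbL (by positivity)
  have e2 : b * b ≤ L * b := mul_le_mul_of_nonneg_right (by linarith) hb0.le
  have e3 : L ^ 2 * dn * dn ≤ L ^ 2 * dn * 1 :=
    mul_le_mul_of_nonneg_left hd (by positivity)
  have e4 : L * dn * b ≤ L * dn * L := mul_le_mul_of_nonneg_left hbL (by positivity)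
  have hpoly : (L + b) * (L * dn + b) + (L * dn + b) ^ 2 ≤ 5 * (L ^ 2 * dn + L * b) := by
    nlinarith [e1, e2, e3, e4]
  have hEC : (0:ℝ) ≤ Real.exp (3 * C₂) * C₁ ^ 2 * n ^ 2 := by positivity
  have hfin := mul_le_mul_of_nonneg_left hpoly hEC
  -- assemble
  have step1 : Real.exp a - Real.exp β
      ≤ (a - β) + Real.exp C₂ * (|β| * |a - β|)
        + (Real.exp C₂ * Real.exp (2 * C₂)) * (a - β) ^ 2 := by
    linarith [key1, ht1, ht2]
  have step2 : Real.exp C₂ * (|β| * |a - β|)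
      ≤ Real.exp (3 * C₂) * (C₁ ^ 2 * ((L + b) * (L * dn + b)) * n ^ 2) := by
    have h0 : (0:ℝ) ≤ |β| * |a - β| := mul_nonneg (abs_nonneg _) (abs_nonneg _)
    calc Real.exp C₂ * (|β| * |a - β|)
        ≤ Real.exp (3 * C₂) * (|β| * |a - β|) := mul_le_mul_of_nonneg_right hE1 h0
      _ ≤ _ := mul_le_mul_of_nonneg_left hP1 (Real.exp_pos _).le
  have step3 : (Real.exp C₂ * Real.exp (2 * C₂)) * (a - β) ^ 2
      ≤ Real.exp (3 * C₂) * (C₁ ^ 2 * (L * dn + b) ^ 2 * n ^ 2) := by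
    rw [hE2]
    exact mul_le_mul_of_nonneg_left hP2 (Real.exp_pos _).le
  have hfinal : Real.exp a - Real.exp β
      ≤ (a - β) + 5 * C₁ ^ 2 * Real.exp (3 * C₂) * (L ^ 2 * dn + L * b) * n ^ 2 := by
    nlinarith [step1, step2, step3, hfin]
  exact hfinal
end
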